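/- Let 𝔄 be a unital C*-algebra, ω : 𝔄 → ℂ a state, and U ∈ 𝔄 a unitary element. Then for any Y ∈ 𝔄, |ω(U)ω(Y) − ω(UY)| ≤ √(1 − |ω(U)|²) · √(ω(Y*Y)). -/

import Mathlib

/-- Let 𝔄 be a unital C*-algebra, ω a state on 𝔄 and `U ∈ 𝔄` unitary.
Then for any `Y ∈ 𝔄`, `|ω(U)ω(Y) − ω(UY)| ≤ √(1 − |ω(U)|²) · √(ω(Y*Y))`. -/
theorem statement0 {A : Type*} [NormedRing A] [StarRing A] [CStarRing A]
    [NormedAlgebra ℂ A] [CompleteSpace A] [StarModule ℂ A]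
    (ω : A →ₗ[ℂ] ℂ)
    (hpos : ∀ a : A, ∃ r : ℝ, 0 ≤ r ∧ ω (star a * a) = (r : ℂ))
    (hone : ω 1 = 1)
    (U : A) (hU : U ∈ unitary A) (Y : A) :
    ‖ω U * ω Y - ω (U * Y)‖ ≤
      Real.sqrt (1 - ‖ω U‖ ^ 2) * Real.sqrt ((ω (star Y * Y)).re) := by
  have hreal : ∀ a : A, (ω (star a * a)).im = 0 := by
    intro a
    obtain ⟨r, _, hr⟩ := hpos a
    rw [hr]; simp
  have hstar : ∀ a : A, ω (star a) = starRingEnd ℂ (ω a) := by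
    intro a
    have h1 : (ω (star a * a)).im = 0 := hreal a
    have h2 := hreal (a + 1)
    have h3 := hreal (a + Complex.I • 1)
    have e2 : star (a + 1) * (a + 1) = star a * a + star a + a + 1 := by
      simp [star_add, add_mul, mul_add]; abel
    have e3 : star (a + Complex.I • 1) * (a + Complex.I • 1)
        = star a * a + Complex.I • star a + (-Complex.I) • a + 1 := by
      simp [star_add, star_smul, Complex.conj_I, add_mul, mul_add, mul_smul_comm,
        smul_mul_assoc, smul_smul, Complex.I_mul_I, neg_smul, sub_eq_add_neg]
      abel
    rw [e2] at h2
    rw [e3] at h3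
    simp only [map_add, map_smul, hone, smul_eq_mul] at h2 h3
    simp only [Complex.add_im, Complex.mul_im, Complex.I_re, Complex.I_im,
      Complex.neg_re, Complex.neg_im, Complex.one_im, h1] at h2 h3
    apply Complex.ext <;> simp [Complex.conj_re, Complex.conj_im] <;> linarith
  let core : PreInnerProductSpace.Core ℂ A :=
    { inner := fun a b => ω (star a * b)
      conj_inner_symm := fun x y => by
        show starRingEnd ℂ (ω (star y * x)) = ω (star x * y)
        rw [← hstar, star_mul, star_star]
      re_inner_nonneg := fun x => by
        obtain ⟨r, hr0, hr⟩ := hpos x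
        show 0 ≤ (ω (star x * x)).re
        rw [hr]; simpa using hr0
      add_left := fun x y z => by
        show ω (star (x + y) * z) = ω (star x * z) + ω (star y * z)
        rw [star_add, add_mul, map_add]
      smul_left := fun x y r => by
        show ω (star (r • x) * y) = starRingEnd ℂ r * ω (star x * y)
        rw [star_smul, smul_mul_assoc, map_smul, smul_eq_mul]
        rfl }
  set X : A := ω U • 1 - U with hX
  have key := @InnerProductSpace.Core.inner_mul_inner_self_le ℂ A _ _ _ core (star X) Y
  have hXY : (@inner ℂ A core.toInner (star X) Y : ℂ) = ω U * ω Y - ω (U * Y) := by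
    show ω (star (star X) * Y) = _
    rw [star_star, hX, sub_mul, smul_mul_assoc, one_mul, map_sub, map_smul, smul_eq_mul]
  have hUU : U * star U = 1 := (Unitary.mem_iff.mp hU).2
  have hXX : (@inner ℂ A core.toInner (star X) (star X) : ℂ) = 1 - (‖ω U‖ : ℂ) ^ 2 := by
    show ω (star (star X) * star X) = _
    rw [star_star, hX]
    have e : (ω U • 1 - U) * star (ω U • 1 - U)
        = (ω U * starRingEnd ℂ (ω U)) • 1 - ω U • star U - starRingEnd ℂ (ω U) • U
          + U * star U := by
      rw [star_sub, star_smul, star_one]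
      simp only [sub_mul, mul_sub, smul_mul_assoc, mul_smul_comm, one_mul, mul_one,
        smul_smul, Complex.star_def, smul_sub, smul_add]
      module
    rw [e, hUU, map_add, map_sub, map_sub, map_smul, map_smul, map_smul, hone,
      hstar U]
    simp only [smul_eq_mul, mul_one]
    rw [mul_comm ((starRingEnd ℂ) (ω U)) (ω U), Complex.mul_conj, Complex.normSq_eq_norm_sq]
    push_cast
    ring
  have hYY : (@inner ℂ A core.toInner Y Y : ℂ) = ω (star Y * Y) := rfl
  have hsymm : ‖(@inner ℂ A core.toInner Y (star X) : ℂ)‖ = ‖(@inner ℂ A core.toInner (star X) Y : ℂ)‖ := by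
    rw [← core.conj_inner_symm Y (star X)]
    exact (RCLike.norm_conj _)
  rw [hsymm, hXY, hXX, hYY] at key
  simp only [RCLike.re_to_complex] at key
  have hb : 0 ≤ (ω (star Y * Y)).re := by
    obtain ⟨r, hr0, hr⟩ := hpos Y
    rw [hr]; simpa using hr0
  have ha : 0 ≤ 1 - ‖ω U‖ ^ 2 := by
    have h := core.re_inner_nonneg (star X)
    rw [show core.inner (star X) (star X) = @inner ℂ A core.toInner (star X) (star X) from rfl, hXX] at h
    simp only [RCLike.re_to_complex, Complex.sub_re, Complex.one_re] at h
    have : ((‖ω U‖ : ℂ) ^ 2).re = ‖ω U‖ ^ 2 := by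
      rw [← Complex.ofReal_pow, Complex.ofReal_re]
    linarith [h, this.symm.le, this.le]
  have key2 : ‖ω U * ω Y - ω (U * Y)‖ * ‖ω U * ω Y - ω (U * Y)‖
      ≤ (1 - ‖ω U‖ ^ 2) * (ω (star Y * Y)).re := by
    have h1 : ((1 : ℂ) - (‖ω U‖ : ℂ) ^ 2).re = 1 - ‖ω U‖ ^ 2 := by
      rw [Complex.sub_re, Complex.one_re, ← Complex.ofReal_pow, Complex.ofReal_re]
    rw [← h1]
    exact key
  rw [← Real.sqrt_mul ha]
  have hD : 0 ≤ ‖ω U * ω Y - ω (U * Y)‖ := norm_nonneg _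
  nlinarith [Real.sq_sqrt (mul_nonneg ha hb), Real.sqrt_nonneg ((1 - ‖ω U‖ ^ 2) * (ω (star Y * Y)).re)]
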